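/- With x, α as above and p = max ⌢(x,α): if p is a response then p is the unique element of x ∩ A(α), and if p is a query then p is the unique element of α ∩ A(x); here A(x) = { q = rc : r ∈ x, q is a query in P, and there is no v with qv ∈ x }, and symmetrically A(α) = { r = qv : q ∈ α, r a response in P, no c with rc ∈ α }. -/

import Mathlib

universe u v

variable {C : Type u} {V : Type v}

/-- A word over cells (inl) and values (inr) is alternating, starting with a cell,
when even positions are cells and odd positions are values. -/
def Alternating (w : List (C ⊕ V)) : Prop :=
  ∀ i (h : i < w.length),
    (i % 2 = 0 → (w.get ⟨i, h⟩).isLeft = true) ∧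
    (i % 2 = 1 → (w.get ⟨i, h⟩).isRight = true)

/-- P is the set of positions of a sequential data structure: non-empty
alternating words starting with a cell, closed under non-empty prefixes. -/
def IsSDS (P : Set (List (C ⊕ V))) : Prop :=
  (∀ p ∈ P, p ≠ []) ∧ (∀ p ∈ P, Alternating p) ∧
  (∀ p ∈ P, ∀ q, q <+: p → q ≠ [] → q ∈ P)

/-- A response: a position of even length (ending with a value). -/
def IsResponse (P : Set (List (C ⊕ V))) (r : List (C ⊕ V)) : Prop :=
  r ∈ P ∧ r.length % 2 = 0

/-- A query: a position of odd length (ending with a cell). -/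
def IsQuery (P : Set (List (C ⊕ V))) (q : List (C ⊕ V)) : Prop :=
  q ∈ P ∧ q.length % 2 = 1


/-- Longest common prefix (greatest lower bound for the prefix order). -/
def lcp {α : Type _} [DecidableEq α] : List α → List α → List α
  | a :: as, b :: bs => if a = b then a :: lcp as bs else []
  | _, _ => []

/-- A strategy: a set of responses closed under response prefixes and under
binary non-empty greatest lower bounds. -/
def IsStrategy [DecidableEq C] [DecidableEq V]
    (P : Set (List (C ⊕ V))) (x : Set (List (C ⊕ V))) : Prop :=
  (∀ r ∈ x, IsResponse P r) ∧
  (∀ r ∈ x, ∀ r', r' <+: r → IsResponse P r' → r' ∈ x) ∧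
  (∀ r₁ ∈ x, ∀ r₂ ∈ x, lcp r₁ r₂ ≠ [] → lcp r₁ r₂ ∈ x)

/-- A counter-strategy: a non-empty set of queries closed under query prefixes
and under binary greatest lower bounds. -/
def IsCounterStrategy [DecidableEq C] [DecidableEq V]
    (P : Set (List (C ⊕ V))) (α : Set (List (C ⊕ V))) : Prop :=
  α.Nonempty ∧
  (∀ q ∈ α, IsQuery P q) ∧
  (∀ q ∈ α, ∀ q', q' <+: q → IsQuery P q' → q' ∈ α) ∧
  (∀ q₁ ∈ α, ∀ q₂ ∈ α, lcp q₁ q₂ ≠ [] → lcp q₁ q₂ ∈ α)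

/-- The play of x against α: positions all of whose response prefixes are in x
and all of whose query prefixes are in α. -/
def play (P x α : Set (List (C ⊕ V))) : Set (List (C ⊕ V)) :=
  {p | p ∈ P ∧ (∀ r, r <+: p → IsResponse P r → r ∈ x) ∧
       (∀ q, q <+: p → IsQuery P q → q ∈ α)}

/-- A(x): queries accessible from the strategy x. -/
def AccS (P x : Set (List (C ⊕ V))) : Set (List (C ⊕ V)) :=
  {q | IsQuery P q ∧ (q.dropLast = [] ∨ q.dropLast ∈ x) ∧
       ∀ v : V, q ++ [Sum.inr v] ∉ x}

/-- A(α): responses accessible from the counter-strategy α. -/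
def AccC (P α : Set (List (C ⊕ V))) : Set (List (C ⊕ V)) :=
  {r | IsResponse P r ∧ r.dropLast ∈ α ∧ ∀ c : C, r ++ [Sum.inl c] ∉ α}


private lemma snoc_get_prefix {β : Type _} {p m : List β} (h : p <+: m)
    (hl : p.length < m.length) : p ++ [m[p.length]] <+: m := by
  obtain ⟨t, rfl⟩ := h
  rcases t with _ | ⟨a, t⟩
  · simp at hl
  · refine ⟨t, ?_⟩
    rw [List.getElem_append_right (le_refl _)]
    simp

/-- The maximum of the play is the unique element of x ∩ A(α) if it is a
response, and the unique element of α ∩ A(x) if it is a query. -/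
theorem play_max_characterization [DecidableEq C] [DecidableEq V]
    (P : Set (List (C ⊕ V))) (hP : IsSDS P)
    (x α : Set (List (C ⊕ V)))
    (hx : IsStrategy P x) (hα : IsCounterStrategy P α)
    (hfin : x.Finite ∨ α.Finite)
    (m : List (C ⊕ V)) (hm : m ∈ play P x α)
    (hmax : ∀ p ∈ play P x α, p <+: m) :
    (IsResponse P m → m ∈ x ∩ AccC P α ∧ ∀ p ∈ x ∩ AccC P α, p = m) ∧
    (IsQuery P m → m ∈ α ∩ AccS P x ∧ ∀ p ∈ α ∩ AccS P x, p = m) := by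
  obtain ⟨hmP, hmx, hmα⟩ := hm
  obtain ⟨hPne, hPalt, hPpre⟩ := hP
  have hmne : m ≠ [] := hPne m hmP
  have hmlen : 1 ≤ m.length := by
    cases m with
    | nil => exact absurd rfl hmne
    | cons a t => simp
  constructor
  · rintro ⟨hmP', hmev⟩
    have hm2 : 2 ≤ m.length := by omega
    have hmemx : m ∈ x := hmx m (List.prefix_refl m) ⟨hmP', hmev⟩
    have hdne : m.dropLast ≠ [] := by
      intro h
      have := (List.length_dropLast : m.dropLast.length = m.length - 1)
      rw [h] at this
      simp at this
      omega
    have hdq : IsQuery P m.dropLast := by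
      refine ⟨hPpre m hmP _ (List.dropLast_prefix m) hdne, ?_⟩
      rw [List.length_dropLast]; omega
    have hdα : m.dropLast ∈ α := hmα _ (List.dropLast_prefix m) hdq
    have hnotext : ∀ c : C, m ++ [Sum.inl c] ∉ α := by
      intro c hc
      have hplay : m ++ [Sum.inl c] ∈ play P x α := by
        refine ⟨(hα.2.1 _ hc).1, ?_, ?_⟩
        · intro r hr hrq
          refine hmx r ?_ hrq
          have h1 : r.length ≤ m.length + 1 := by
            have := hr.length_le; simpa using this
          have h2 : r.length ≤ m.length := by
            rcases hrq with ⟨_, hre⟩; omega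
          exact List.prefix_of_prefix_length_le hr (List.prefix_append m _) h2
        · intro q hq hqq
          have h1 : q.length ≤ m.length + 1 := by
            have := hq.length_le; simpa using this
          by_cases h2 : q.length ≤ m.length
          · exact hmα q (List.prefix_of_prefix_length_le hq (List.prefix_append m _) h2) hqq
          · have : q = m ++ [Sum.inl c] := by
              apply hq.eq_of_length
              simp; omega
            rwa [this]
      have := (hmax _ hplay).length_le
      simp at this
    refine ⟨⟨hmemx, ⟨hmP', hmev⟩, hdα, hnotext⟩, ?_⟩
    rintro p ⟨hpx, ⟨hpP, hpev⟩, hpd, hpc⟩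
    have hpne : p ≠ [] := hPne p hpP
    have hp1 : 1 ≤ p.length := by
      cases p with
      | nil => exact absurd rfl hpne
      | cons a t => simp
    have hpplay : p ∈ play P x α := by
      refine ⟨hpP, ?_, ?_⟩
      · intro r hr hrq
        exact hx.2.1 p hpx r hr hrq
      · intro q hq hqq
        have hql : q.length ≤ p.dropLast.length := by
          rw [List.length_dropLast]
          have := hq.length_le
          rcases hqq with ⟨_, hqo⟩; omega
        exact hα.2.2.1 _ hpd q
          (List.prefix_of_prefix_length_le hq (List.dropLast_prefix p) hql) hqq
    have hpm := hmax p hpplay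
    by_cases hl : p.length = m.length
    · exact hpm.eq_of_length hl
    · exfalso
      have hlt : p.length < m.length := lt_of_le_of_ne hpm.length_le hl
      have hleft : (m.get ⟨p.length, hlt⟩).isLeft = true :=
        (hPalt m hmP p.length hlt).1 (by omega)
      obtain ⟨c, hc⟩ := Sum.isLeft_iff.mp hleft
      have hpref : p ++ [Sum.inl c] <+: m := by
        have := snoc_get_prefix hpm hlt
        rwa [show m[p.length] = Sum.inl c from hc] at this
      have hq : IsQuery P (p ++ [Sum.inl c]) := by
        refine ⟨hPpre m hmP _ hpref (by simp), ?_⟩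
        simp; omega
      exact hpc c (hmα _ hpref hq)
  · rintro ⟨hmP', hmodd⟩
    have hmemα : m ∈ α := hmα m (List.prefix_refl m) ⟨hmP', hmodd⟩
    have hdrop : m.dropLast = [] ∨ m.dropLast ∈ x := by
      by_cases h1 : m.length ≤ 1
      · left
        have := (List.length_dropLast : m.dropLast.length = m.length - 1)
        have : m.dropLast.length = 0 := by omega
        exact List.eq_nil_of_length_eq_zero this
      · right
        have hdne : m.dropLast ≠ [] := by
          intro h
          have := (List.length_dropLast : m.dropLast.length = m.length - 1)
          rw [h] at this; simp at this; omega
        have hdr : IsResponse P m.dropLast := by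
          refine ⟨hPpre m hmP _ (List.dropLast_prefix m) hdne, ?_⟩
          rw [List.length_dropLast]; omega
        exact hmx _ (List.dropLast_prefix m) hdr
    have hnotext : ∀ v : V, m ++ [Sum.inr v] ∉ x := by
      intro v hv
      have hplay : m ++ [Sum.inr v] ∈ play P x α := by
        refine ⟨(hx.1 _ hv).1, ?_, ?_⟩
        · intro r hr hrq
          have h1 : r.length ≤ m.length + 1 := by
            have := hr.length_le; simpa using this
          by_cases h2 : r.length ≤ m.length
          · exact hmx r (List.prefix_of_prefix_length_le hr (List.prefix_append m _) h2) hrq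
          · have : r = m ++ [Sum.inr v] := by
              apply hr.eq_of_length
              simp; omega
            rwa [this]
        · intro q hq hqq
          refine hmα q ?_ hqq
          have h2 : q.length ≤ m.length := by
            have := hq.length_le
            rcases hqq with ⟨_, hqo⟩
            simp at this; omega
          exact List.prefix_of_prefix_length_le hq (List.prefix_append m _) h2
      have := (hmax _ hplay).length_le
      simp at this
    refine ⟨⟨hmemα, ⟨hmP', hmodd⟩, hdrop, hnotext⟩, ?_⟩
    rintro p ⟨hpα, ⟨hpP, hpodd⟩, hpd, hpv⟩
    have hpplay : p ∈ play P x α := by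
      refine ⟨hpP, ?_, ?_⟩
      · intro r hr hrq
        have hrne : r ≠ [] := hPne r hrq.1
        have hr1 : 1 ≤ r.length := by
          cases r with
          | nil => exact absurd rfl hrne
          | cons a t => simp
        have hr2 : 2 ≤ r.length := by
          rcases hrq with ⟨_, hre⟩; omega
        have hql : r.length ≤ p.dropLast.length := by
          rw [List.length_dropLast]
          have := hr.length_le
          rcases hrq with ⟨_, hre⟩; omega
        have hdin : p.dropLast ∈ x := by
          rcases hpd with h | h
          · exfalso; rw [h] at hql; simp at hql; exact hrne hql
          · exact h
        exact hx.2.1 _ hdin r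
          (List.prefix_of_prefix_length_le hr (List.dropLast_prefix p) hql) hrq
      · intro q hq hqq
        exact hα.2.2.1 p hpα q hq hqq
    have hpm := hmax p hpplay
    by_cases hl : p.length = m.length
    · exact hpm.eq_of_length hl
    · exfalso
      have hlt : p.length < m.length := lt_of_le_of_ne hpm.length_le hl
      have hright : (m.get ⟨p.length, hlt⟩).isRight = true :=
        (hPalt m hmP p.length hlt).2 (by omega)
      obtain ⟨v, hv⟩ := Sum.isRight_iff.mp hright
      have hpref : p ++ [Sum.inr v] <+: m := by
        have := snoc_get_prefix hpm hlt
        rwa [show m[p.length] = Sum.inr v from hv] at this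
      have hr : IsResponse P (p ++ [Sum.inr v]) := by
        refine ⟨hPpre m hmP _ hpref (by simp), ?_⟩
        simp; omega
      exact hpv v (hmx _ hpref hr)
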